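/- For each N, place n(N) = ⌊N·log N + N·x⌋ balls independently and uniformly at random into N urns, where x is a fixed real. Then the probability that every urn contains at least one ball converges, as N → ∞, to exp(−exp(−x)). -/

import Mathlib

open Filter Finset

open Finset

open Classical in
lemma count_surj (n N : ℕ) :
    ((Finset.univ.filter (fun f : Fin n → Fin N => ∀ u : Fin N, ∃ t, f t = u)).card : ℤ)
      = ∑ k ∈ Finset.range (N+1), (-1)^k * (N.choose k) * ((N : ℤ) - k)^n := by
  have key : ∀ S : Finset (Fin N),
      ((Finset.univ.filter (fun f : Fin n → Fin N => ∀ t, f t ∉ S)).card : ℤ)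
        = ((N - S.card : ℕ) : ℤ)^n := by
    intro S
    have h1 : (Finset.univ.filter (fun f : Fin n → Fin N => ∀ t, f t ∉ S))
        = Fintype.piFinset (fun _ : Fin n => Sᶜ) := by
      ext f; simp [Fintype.mem_piFinset]
    rw [h1, Fintype.card_piFinset]
    simp [card_compl]
  have swap : ∑ S ∈ (Finset.univ : Finset (Fin N)).powerset,
      (-1:ℤ)^S.card * ((Finset.univ.filter (fun f : Fin n → Fin N => ∀ t, f t ∉ S)).card : ℤ)
      = ((Finset.univ.filter (fun f : Fin n → Fin N => ∀ u : Fin N, ∃ t, f t = u)).card : ℤ) := by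
    have cast1 : ∀ S : Finset (Fin N),
        ((Finset.univ.filter (fun f : Fin n → Fin N => ∀ t, f t ∉ S)).card : ℤ)
          = ∑ f : Fin n → Fin N, if ∀ t, f t ∉ S then 1 else 0 :=
      fun S => (Finset.sum_boole _ _).symm
    have cast2 : ((Finset.univ.filter (fun f : Fin n → Fin N => ∀ u : Fin N, ∃ t, f t = u)).card : ℤ)
          = ∑ f : Fin n → Fin N, if ∀ u : Fin N, ∃ t, f t = u then 1 else 0 :=
      (Finset.sum_boole _ _).symm
    simp_rw [cast1, cast2, mul_sum]
    rw [Finset.sum_comm]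
    have key2 : ∀ f : Fin n → Fin N,
        ∑ S ∈ (Finset.univ : Finset (Fin N)).powerset,
          (-1:ℤ)^S.card * (if ∀ t, f t ∉ S then 1 else 0)
        = (if ∀ u : Fin N, ∃ t, f t = u then 1 else 0) := by
      intro f
      have h2 : ∀ S : Finset (Fin N), (∀ t, f t ∉ S) ↔ S ⊆ (Finset.image f Finset.univ)ᶜ := by
        intro S
        constructor
        · intro h s hs
          simp only [mem_compl, mem_image, mem_univ, true_and]
          rintro ⟨t, rfl⟩; exact h t hs
        · intro h t ht
          have := h ht
          simp only [mem_compl, mem_image, mem_univ, true_and] at this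
          exact this ⟨t, rfl⟩
      calc ∑ S ∈ (Finset.univ : Finset (Fin N)).powerset,
            (-1:ℤ)^S.card * (if ∀ t, f t ∉ S then 1 else 0)
          = ∑ S ∈ ((Finset.image f Finset.univ)ᶜ).powerset, (-1:ℤ)^S.card := by
            simp only [mul_ite, mul_one, mul_zero]
            rw [← Finset.sum_filter]
            congr 1
            ext S
            simp [h2 S, Finset.mem_powerset]
        _ = (if ∀ u : Fin N, ∃ t, f t = u then 1 else 0) := by
            rw [Finset.sum_powerset_neg_one_pow_card]
            have hiff : (Finset.image f Finset.univ)ᶜ = ∅ ↔ ∀ u : Fin N, ∃ t, f t = u := by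
              rw [Finset.compl_eq_empty_iff, Finset.eq_univ_iff_forall]
              simp
            simp only [hiff]
    exact Finset.sum_congr rfl (fun f _ => key2 f)
  rw [← swap]
  simp_rw [key]
  rw [← Finset.sum_fiberwise_of_maps_to (g := Finset.card)
    (t := Finset.range ((Finset.univ : Finset (Fin N)).card + 1))
    (fun S _ => by
      simpa [Finset.mem_range, Nat.lt_succ_iff] using Finset.card_le_univ S)]
  simp_rw [← Finset.powersetCard_eq_filter]
  have hcard : (Finset.univ : Finset (Fin N)).card = N := by simp
  rw [hcard]
  refine Finset.sum_congr rfl (fun k hk => ?_)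
  have hkN : k ≤ N := Nat.lt_succ_iff.1 (Finset.mem_range.1 hk)
  have : ∀ S ∈ Finset.powersetCard k (Finset.univ : Finset (Fin N)),
      (-1:ℤ)^S.card * ((N - S.card : ℕ) : ℤ)^n = (-1:ℤ)^k * ((N - k : ℕ) : ℤ)^n := by
    intro S hS
    rw [(Finset.mem_powersetCard.1 hS).2]
  rw [Finset.sum_congr rfl this, Finset.sum_const, Finset.card_powersetCard, hcard]
  have : ((N - k : ℕ) : ℤ) = (N : ℤ) - k := by
    push_cast [hkN]; ring
  rw [this]
  push_cast
  ring

lemma log_div_nat_tendsto : Tendsto (fun N : ℕ => Real.log N / N) atTop (nhds 0) :=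
  (Real.isLittleO_log_id_atTop.tendsto_div_nhds_zero).comp tendsto_natCast_atTop_atTop

lemma choose_div_pow_tendsto (k : ℕ) :
    Tendsto (fun N : ℕ => (N.choose k : ℝ) / (N : ℝ) ^ k) atTop
      (nhds (1 / (Nat.factorial k : ℝ))) := by
  have h1 : ∀ᶠ N : ℕ in atTop, (N.choose k : ℝ) / (N : ℝ) ^ k
      = (∏ i ∈ range k, (1 - (i : ℝ) / N)) / (Nat.factorial k : ℝ) := by
    filter_upwards [eventually_ge_atTop (k + 1)] with N hN
    have hN0 : (N : ℝ) ≠ 0 := by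
      have : 0 < N := by omega
      positivity
    have hd : (N.descFactorial k : ℝ) = ∏ i ∈ range k, ((N : ℝ) - i) := by
      rw [Nat.descFactorial_eq_prod_range]
      push_cast
      refine Finset.prod_congr rfl (fun i hi => ?_)
      have : i ≤ N := le_trans (Nat.le_of_lt (mem_range.1 hi)) (by omega)
      push_cast [this]
      ring
    have hc : (Nat.factorial k : ℝ) * (N.choose k : ℝ) = (N.descFactorial k : ℝ) := by
      rw [← Nat.cast_mul, ← Nat.descFactorial_eq_factorial_mul_choose]
    have hprod : ∏ i ∈ range k, (1 - (i : ℝ) / N) = (∏ i ∈ range k, ((N : ℝ) - i)) / N ^ k := by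
      rw [eq_div_iff (by positivity),
        show ((N:ℝ)) ^ k = ∏ _i ∈ range k, (N:ℝ) by simp, ← Finset.prod_mul_distrib]
      refine Finset.prod_congr rfl (fun i _ => ?_)
      field_simp
    rw [hprod, ← hd, ← hc]
    field_simp [Nat.factorial_ne_zero]
  rw [tendsto_congr' h1]
  have h2 : Tendsto (fun N : ℕ => ∏ i ∈ range k, (1 - (i : ℝ) / N)) atTop (nhds 1) := by
    rw [show (1 : ℝ) = ∏ _i ∈ range k, (1:ℝ) by simp]
    refine tendsto_finset_prod _ (fun i _ => ?_)
    simpa using tendsto_const_nhds.sub (tendsto_const_div_atTop_nhds_zero_nat (i : ℝ))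
  exact h2.div_const _

lemma pow_mul_pow_tendsto (x : ℝ) (k : ℕ) :
    Tendsto (fun N : ℕ => (N : ℝ) ^ k * (1 - (k : ℝ) / N) ^ (⌊(N : ℝ) * Real.log N + N * x⌋₊))
      atTop (nhds (Real.exp (-(k * x)))) := by
  set n : ℕ → ℕ := fun N => ⌊(N : ℝ) * Real.log N + N * x⌋₊ with hn
  set L : ℕ → ℝ := fun N => Real.log (1 - (k : ℝ) / N) with hL
  -- N * L N → -k
  have hNL : Tendsto (fun N : ℕ => (N : ℝ) * L N) atTop (nhds (-(k : ℝ))) := by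
    have h := (Real.tendsto_mul_log_one_add_div_atTop (-(k:ℝ))).comp
      tendsto_natCast_atTop_atTop
    refine h.congr (fun N => ?_)
    simp [hL, Function.comp, neg_div, sub_eq_add_neg]
  -- L N → 0
  have hL0 : Tendsto L atTop (nhds 0) := by
    have h1 : Tendsto (fun N : ℕ => 1 - (k : ℝ) / N) atTop (nhds 1) := by
      simpa using tendsto_const_nhds.sub (tendsto_const_div_atTop_nhds_zero_nat (k : ℝ))
    have := ((Real.continuousAt_log one_ne_zero).tendsto).comp h1
    rw [Real.log_one] at this
    exact this
  -- A: N log N * (L N + k/N) → 0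
  have hA : Tendsto (fun N : ℕ => (N : ℝ) * Real.log N * (L N + (k : ℝ) / N)) atTop (nhds 0) := by
    have hg : Tendsto (fun N : ℕ => (2 * (k:ℝ)^2) * (Real.log N / N)) atTop (nhds 0) := by
      simpa using log_div_nat_tendsto.const_mul (2 * (k:ℝ)^2)
    refine squeeze_zero_norm' ?_ hg
    · filter_upwards [eventually_ge_atTop (2 * k + 1), eventually_ge_atTop 1] with N hN hN1
      have hN0 : (0:ℝ) < N := by exact_mod_cast Nat.lt_of_lt_of_le Nat.zero_lt_one hN1
      have ht0 : (0:ℝ) ≤ (k : ℝ) / N := by positivity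
      have ht : (k : ℝ) / N ≤ 1 / 2 := by
        rw [div_le_div_iff₀ hN0 (by norm_num)]
        have : (2 * k : ℝ) ≤ N := by exact_mod_cast le_trans (by omega : 2 * k ≤ 2 * k + 1) hN
        linarith
      have habs : |(k : ℝ) / N| < 1 := by rw [abs_of_nonneg ht0]; linarith
      have hb := Real.abs_log_sub_add_sum_range_le habs 1
      simp only [Finset.range_one, Finset.sum_singleton, pow_one, Nat.cast_zero, zero_add,
        div_one] at hb
      -- hb : |k/N + log (1 - k/N)| ≤ |k/N|^2 / (1 - |k/N|)
      have hb2 : |L N + (k : ℝ) / N| ≤ 2 * ((k:ℝ)/N)^2 := by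
        rw [abs_of_nonneg ht0] at hb
        calc |L N + (k : ℝ) / N| = |(k : ℝ) / N + L N| := by rw [add_comm]
          _ ≤ ((k:ℝ)/N)^2 / (1 - (k:ℝ)/N) := by
              have : ((k:ℝ)/N)^(1+1) = ((k:ℝ)/N)^2 := by norm_num
              rw [← this]; exact hb
          _ ≤ ((k:ℝ)/N)^2 / (1/2) := by
              apply div_le_div_of_nonneg_left (by positivity) (by norm_num) (by linarith)
          _ = 2 * ((k:ℝ)/N)^2 := by ring
      have hlogN : 0 ≤ Real.log N := Real.log_nonneg (by exact_mod_cast hN1)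
      calc ‖(N : ℝ) * Real.log N * (L N + (k : ℝ) / N)‖
          = (N : ℝ) * Real.log N * |L N + (k : ℝ) / N| := by
            rw [Real.norm_eq_abs, abs_mul, abs_of_nonneg (by positivity)]
        _ ≤ (N : ℝ) * Real.log N * (2 * ((k:ℝ)/N)^2) := by
            apply mul_le_mul_of_nonneg_left hb2 (by positivity)
        _ = (2 * (k:ℝ)^2) * (Real.log N / N) := by field_simp
  -- B
  have hB : Tendsto (fun N : ℕ => x * ((N : ℝ) * L N)) atTop (nhds (x * (-(k:ℝ)))) :=
    hNL.const_mul x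
  -- delta term
  have hD : Tendsto (fun N : ℕ => ((n N : ℝ) - ((N : ℝ) * Real.log N + N * x)) * L N)
      atTop (nhds 0) := by
    have hg : Tendsto (fun N : ℕ => |L N|) atTop (nhds 0) := by simpa using hL0.abs
    refine squeeze_zero_norm' ?_ hg
    · have hev : ∀ᶠ N : ℕ in atTop, Real.exp (-x) ≤ (N : ℝ) :=
        tendsto_natCast_atTop_atTop.eventually_ge_atTop (Real.exp (-x))
      filter_upwards [hev, eventually_ge_atTop 1] with N hN hN1
      have hN0 : (0:ℝ) < N := by exact_mod_cast Nat.lt_of_lt_of_le Nat.zero_lt_one hN1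
      have hy : 0 ≤ (N : ℝ) * Real.log N + N * x := by
        have hlog : -x ≤ Real.log N := by
          have := Real.log_le_log (Real.exp_pos (-x)) hN
          rwa [Real.log_exp] at this
        nlinarith
      have h1 : ((n N : ℝ)) ≤ (N : ℝ) * Real.log N + N * x := Nat.floor_le hy
      have h2 : (N : ℝ) * Real.log N + N * x - 1 < (n N : ℝ) := Nat.sub_one_lt_floor _
      have habs : |(n N : ℝ) - ((N : ℝ) * Real.log N + N * x)| ≤ 1 := by
        rw [abs_le]; constructor <;> linarith
      rw [norm_mul, Real.norm_eq_abs, Real.norm_eq_abs]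
      calc |(n N : ℝ) - ((N : ℝ) * Real.log N + N * x)| * |L N| ≤ 1 * |L N| :=
            mul_le_mul_of_nonneg_right habs (abs_nonneg _)
        _ = |L N| := one_mul _
  -- combine
  have hsum : Tendsto (fun N : ℕ => (N : ℝ) * Real.log N * (L N + (k : ℝ) / N)
      + x * ((N : ℝ) * L N)
      + ((n N : ℝ) - ((N : ℝ) * Real.log N + N * x)) * L N) atTop (nhds (x * (-(k:ℝ)))) := by
    have := (hA.add hB).add hD
    simpa using this
  have hinner : Tendsto (fun N : ℕ => (k : ℝ) * Real.log N + (n N : ℝ) * L N) atTop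
      (nhds (x * (-(k:ℝ)))) := by
    refine hsum.congr' ?_
    filter_upwards [eventually_ge_atTop 1] with N hN1
    have hN0 : (N:ℝ) ≠ 0 := by
      have : 0 < N := hN1
      positivity
    field_simp
    ring
  have hexp := (Real.continuous_exp.tendsto _).comp hinner
  have hfin : Tendsto (fun N : ℕ => Real.exp ((k : ℝ) * Real.log N + (n N : ℝ) * L N)) atTop
      (nhds (Real.exp (-(k * x)))) := by
    rw [show -((k:ℝ) * x) = x * -(k:ℝ) by ring]
    exact hexp
  refine hfin.congr' ?_
  filter_upwards [eventually_ge_atTop (k + 1)] with N hN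
  have hN0 : (0:ℝ) < N := by
    have : 0 < N := by omega
    exact_mod_cast this
  have hbase : (0:ℝ) < 1 - (k : ℝ) / N := by
    rw [sub_pos, div_lt_one hN0]
    exact_mod_cast Nat.lt_of_lt_of_le (Nat.lt_succ_self k) hN
  rw [Real.exp_add, Real.exp_nat_mul, Real.exp_nat_mul, Real.exp_log hN0,
    Real.exp_log hbase]

lemma tsum_g_eq (x : ℝ) :
    ∑' k : ℕ, (-Real.exp (-x)) ^ k / (Nat.factorial k : ℝ) = Real.exp (-Real.exp (-x)) := by
  rw [show Real.exp (-Real.exp (-x)) = NormedSpace.exp (-Real.exp (-x)) from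
    congrFun Real.exp_eq_exp_ℝ _]
  exact (NormedSpace.expSeries_div_hasSum_exp (-Real.exp (-x))).tsum_eq

lemma pointwise_tendsto (x : ℝ) (k : ℕ) :
    Tendsto (fun N : ℕ => (-1:ℝ)^k * (N.choose k : ℝ)
        * (1 - (k:ℝ)/N) ^ (⌊(N : ℝ) * Real.log N + N * x⌋₊))
      atTop (nhds ((-Real.exp (-x)) ^ k / (Nat.factorial k : ℝ))) := by
  have h := ((choose_div_pow_tendsto k).mul (pow_mul_pow_tendsto x k)).const_mul ((-1:ℝ)^k)
  have hval : (-1:ℝ)^k * (1 / (Nat.factorial k : ℝ) * Real.exp (-(k * x)))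
      = (-Real.exp (-x)) ^ k / (Nat.factorial k : ℝ) := by
    rw [show ((-Real.exp (-x)) ^ k : ℝ) = (-1)^k * Real.exp (-x) ^ k by
      rw [← neg_one_mul, mul_pow], ← Real.exp_nat_mul, mul_neg]
    ring
  rw [hval] at h
  refine h.congr' ?_
  filter_upwards [eventually_ge_atTop 1] with N hN
  have hN0 : ((N:ℝ)) ^ k ≠ 0 := by
    have : (0:ℝ) < N := by exact_mod_cast Nat.lt_of_lt_of_le Nat.zero_lt_one hN
    positivity
  field_simp

lemma dominated (x : ℝ) : ∀ᶠ N : ℕ in atTop, ∀ k : ℕ,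
    ‖(-1:ℝ)^k * (N.choose k : ℝ) * (1 - (k:ℝ)/N) ^ (⌊(N : ℝ) * Real.log N + N * x⌋₊)‖
      ≤ (Real.exp (1 - x)) ^ k / (Nat.factorial k : ℝ) := by
  filter_upwards [eventually_ge_atTop 1] with N hN k
  have hN0 : (0:ℝ) < N := by exact_mod_cast Nat.lt_of_lt_of_le Nat.zero_lt_one hN
  by_cases hk : k ≤ N
  · set n : ℕ := ⌊(N : ℝ) * Real.log N + N * x⌋₊ with hn
    have hb0 : (0:ℝ) ≤ 1 - (k:ℝ)/N := by
      rw [sub_nonneg, div_le_one hN0]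
      exact_mod_cast hk
    have hnorm : ‖(-1:ℝ)^k * (N.choose k : ℝ) * (1 - (k:ℝ)/N) ^ n‖
        = (N.choose k : ℝ) * (1 - (k:ℝ)/N) ^ n := by
      rw [Real.norm_eq_abs, abs_mul, abs_mul, abs_pow, abs_neg, abs_one, one_pow, one_mul,
        Nat.abs_cast, abs_pow, abs_of_nonneg hb0]
    rw [hnorm]
    have hchoose : (N.choose k : ℝ) ≤ (N:ℝ)^k / (Nat.factorial k : ℝ) := by
      rw [le_div_iff₀ (by positivity)]
      have h1 : (Nat.factorial k) * (N.choose k) ≤ N ^ k := by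
        rw [← Nat.descFactorial_eq_factorial_mul_choose]
        exact Nat.descFactorial_le_pow N k
      calc (N.choose k : ℝ) * (Nat.factorial k : ℝ) = ((Nat.factorial k * N.choose k : ℕ) : ℝ) := by
            push_cast; ring
        _ ≤ ((N ^ k : ℕ) : ℝ) := by exact_mod_cast h1
        _ = (N:ℝ)^k := by push_cast; ring
    have hpow : (1 - (k:ℝ)/N) ^ n ≤ Real.exp (-(k * Real.log N) + k * (1 - x)) := by
      have h1 : (1 - (k:ℝ)/N) ≤ Real.exp (-((k:ℝ)/N)) := by
        have := Real.add_one_le_exp (-((k:ℝ)/N))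
        linarith
      have h2 : (1 - (k:ℝ)/N) ^ n ≤ Real.exp (-((k:ℝ)/N)) ^ n :=
        pow_le_pow_left₀ hb0 h1 n
      refine h2.trans ?_
      rw [← Real.exp_nat_mul]
      apply Real.exp_le_exp.2
      rw [mul_comm]
      have hfl : (N : ℝ) * Real.log N + N * x - 1 < (n : ℝ) := Nat.sub_one_lt_floor _
      have hkn : (0:ℝ) ≤ (k:ℝ)/N := by positivity
      have : -((k:ℝ)/N) * n ≤ -((k:ℝ)/N) * ((N : ℝ) * Real.log N + N * x - 1) := by
        apply mul_le_mul_of_nonpos_left (le_of_lt hfl) (by linarith)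
      refine this.trans ?_
      have hexp : -((k:ℝ)/N) * ((N : ℝ) * Real.log N + N * x - 1)
          = -(k * Real.log N) - k * x + k / N := by
        field_simp
        ring
      rw [hexp]
      have hkN : (k:ℝ)/N ≤ k := by
        rw [div_le_iff₀ hN0]
        nlinarith [Nat.cast_nonneg (α := ℝ) k, (show (1:ℝ) ≤ N by exact_mod_cast hN)]
      linarith
    have hexpk : Real.exp (-((k:ℝ) * Real.log N)) = ((N:ℝ)^k)⁻¹ := by
      rw [show -((k:ℝ) * Real.log N) = (k:ℝ) * (-Real.log N) by ring, Real.exp_nat_mul,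
        Real.exp_neg, Real.exp_log hN0, inv_pow]
    have hpow' : (1 - (k:ℝ)/N) ^ n ≤ ((N:ℝ)^k)⁻¹ * Real.exp ((k:ℝ) * (1 - x)) := by
      rw [← hexpk, ← Real.exp_add]
      exact hpow
    calc (N.choose k : ℝ) * (1 - (k:ℝ)/N) ^ n
        ≤ ((N:ℝ)^k / (Nat.factorial k : ℝ)) * (((N:ℝ)^k)⁻¹ * Real.exp ((k:ℝ) * (1 - x))) :=
          mul_le_mul hchoose hpow' (pow_nonneg hb0 n) (by positivity)
      _ = (Real.exp (1 - x)) ^ k / (Nat.factorial k : ℝ) := by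
          rw [Real.exp_nat_mul]
          have h1 : ((N:ℝ)^k) ≠ 0 := by positivity
          field_simp
  · have : N.choose k = 0 := Nat.choose_eq_zero_of_lt (by omega)
    rw [this]
    simp only [Nat.cast_zero, mul_zero, zero_mul, norm_zero]
    positivity

open Classical in
/-- Classical Erdős–Rényi coupon collector theorem: placing `⌊N log N + N x⌋` balls
independently and uniformly into `N` urns, the probability that every urn contains at
least one ball tends to `exp(−exp(−x))` as `N → ∞`. -/
theorem coupon_collector_limit (x : ℝ) :
    Tendsto (fun N : ℕ =>
        ((Finset.univ.filter (fun f : Fin ⌊(N : ℝ) * Real.log N + N * x⌋₊ → Fin N =>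
            ∀ u : Fin N, ∃ t, f t = u)).card : ℝ)
          / (N : ℝ) ^ ⌊(N : ℝ) * Real.log N + N * x⌋₊)
      atTop (nhds (Real.exp (-Real.exp (-x)))) := by
  set f : ℕ → ℕ → ℝ := fun N k => (-1:ℝ)^k * (N.choose k : ℝ)
      * (1 - (k:ℝ)/N) ^ (⌊(N : ℝ) * Real.log N + N * x⌋₊) with hf
  have hmain : Tendsto (fun N => ∑' k, f N k) atTop (nhds (Real.exp (-Real.exp (-x)))) := by
    rw [← tsum_g_eq x]
    exact tendsto_tsum_of_dominated_convergence
      (Real.summable_pow_div_factorial (Real.exp (1 - x)))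
      (fun k => pointwise_tendsto x k) (dominated x)
  refine hmain.congr' ?_
  filter_upwards [eventually_ge_atTop 1] with N hN
  set n := ⌊(N : ℝ) * Real.log N + N * x⌋₊ with hn
  have hN0 : (0:ℝ) < N := by exact_mod_cast Nat.lt_of_lt_of_le Nat.zero_lt_one hN
  have hsum : ∑' k, f N k = ∑ k ∈ Finset.range (N+1), f N k := by
    refine tsum_eq_sum (fun k hk => ?_)
    have hlt : N < k := by
      by_contra h
      exact hk (Finset.mem_range.2 (by omega))
    simp [hf, Nat.choose_eq_zero_of_lt hlt]
  rw [hsum]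
  have hc := count_surj n N
  have hcR : ((Finset.univ.filter (fun f : Fin n → Fin N =>
      ∀ u : Fin N, ∃ t, f t = u)).card : ℝ)
      = ∑ k ∈ Finset.range (N+1), (-1:ℝ)^k * (N.choose k : ℝ) * ((N:ℝ) - k)^n := by
    have := congrArg (fun z : ℤ => (z : ℝ)) hc
    push_cast at this
    exact this
  rw [hcR, Finset.sum_div]
  refine Finset.sum_congr rfl (fun k hk => ?_)
  have hNn : ((N:ℝ))^n ≠ 0 := by positivity
  show (-1:ℝ)^k * (N.choose k : ℝ) * (1 - (k:ℝ)/N) ^ n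
      = (-1:ℝ)^k * (N.choose k : ℝ) * ((N:ℝ) - k)^n / (N:ℝ)^n
  have h2 : (1 - (k:ℝ)/N) = ((N:ℝ) - k) / N := by field_simp
  rw [h2, div_pow]
  field_simp
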